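/- In Clear Mastermind with n positions and k = c·n colors (c ≥ 1), the codebreaker can always win in c + n − 1 guesses, so F(c·n, n) ≤ c + n − 1. -/

import Mathlib

attribute [local instance] Classical.propDecidable

namespace CM

/-- Wordle-style feedback symbols: Green, Yellow, Black. -/
inductive Fbk | G | Y | B
deriving DecidableEq

variable {k n : ℕ}

/-- The multiset of values of the answer `y` at positions not exactly matched
by the guess `x`. -/
def misses (x y : Fin n → Fin k) : Multiset (Fin k) :=
  (Finset.univ.filter (fun i => x i ≠ y i)).val.map y

/-- The multiset of still-unmatched answer values after greedily processing the
first `j` positions of the guess left to right. -/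
def fbState (x y : Fin n → Fin k) : ℕ → Multiset (Fin k)
  | 0 => misses x y
  | j + 1 =>
    if h : j < n then
      if x ⟨j, h⟩ = y ⟨j, h⟩ then fbState x y j
      else if x ⟨j, h⟩ ∈ fbState x y j then (fbState x y j).erase (x ⟨j, h⟩)
      else fbState x y j
    else fbState x y j

/-- Wordle-style feedback: `G` for an exact match, otherwise `Y` if the guessed
value occurs among the remaining unmatched values of the answer (consumed
greedily left to right), and `B` otherwise. -/
def feedback (x y : Fin n → Fin k) (i : Fin n) : Fbk :=
  if x i = y i then Fbk.G
  else if x i ∈ fbState x y i.val then Fbk.Y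
  else Fbk.B

/-- A codebreaker strategy: the next guess as a function of the feedback
received so far. -/
def Strategy (k n : ℕ) : Type :=
  List (Fin n → Fbk) → (Fin n → Fin k)

/-- The feedback history after `r` rounds of playing strategy `S` against
secret `y`. -/
def hist (S : Strategy k n) (y : Fin n → Fin k) : ℕ → List (Fin n → Fbk)
  | 0 => []
  | r + 1 => hist S y r ++ [feedback (S (hist S y r)) y]

/-- The guess made by strategy `S` in round `r` (0-indexed) against secret `y`. -/
def guess (S : Strategy k n) (y : Fin n → Fin k) (r : ℕ) : Fin n → Fin k :=
  S (hist S y r)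

/-- `S` wins within `m` rounds: against every secret, one of the first `m`
guesses equals the secret. -/
def WinsIn (S : Strategy k n) (m : ℕ) : Prop :=
  ∀ y : Fin n → Fin k, ∃ r < m, guess S y r = y

/-- `F k n`: the least `m` such that some codebreaker strategy wins the Clear
Mastermind game with `k` colors and `n` positions within `m` rounds. -/
noncomputable def F (k n : ℕ) : ℕ :=
  sInf {m | ∃ S : Strategy k n, WinsIn S m}

end CM

namespace CMAux
open CM

variable {k n : ℕ}

inductive M (k n : ℕ) where
  | chain (td : List (Fin k))
  | pair (p : Fin n) (td : List (Fin k))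

abbrev St (k n : ℕ) := (Fin n → Option (Fin k)) × M k n

def sg (d : Fin k) (s : St k n) (i : Fin n) : Fin k :=
  (s.1 i).getD (match s.2 with
    | .chain td => td.headD d
    | .pair p td => if i = p then td.tail.headD d else td.headD d)

def stepPins (d : Fin k) (s : St k n) (fb : Fin n → Fbk) : Fin n → Option (Fin k) :=
  fun i => if s.1 i = none then (if fb i = Fbk.G then some (sg d s i) else none) else s.1 i

def stepMode (s : St k n) (fb : Fin n → Fbk) : M k n :=
  match s.2 with
  | .chain td => .chain td.tail
  | .pair p td => if fb p = Fbk.G then .chain td.tail.tail else .pair p td.tail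

def step (d : Fin k) (s : St k n) (fb : Fin n → Fbk) : St k n :=
  (stepPins d s fb, stepMode s fb)

def play (d : Fin k) (y : Fin n → Fin k) (s : St k n) : ℕ → St k n
  | 0 => s
  | j + 1 => step d (play d y s j) (feedback (sg d (play d y s j)) y)

lemma play_front (d : Fin k) (y : Fin n → Fin k) (s : St k n) :
    ∀ j, play d y s (j + 1) = play d y (step d s (feedback (sg d s) y)) j := by
  intro j
  induction j with
  | zero => rfl
  | succ j ih => show step _ (play d y s (j+1)) _ = _; rw [ih]; rfl

def phi (s : St k n) : ℕ :=
  match s.2 with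
  | .chain td => max 1 td.length
  | .pair _ td => td.length - 1

def lenM (s : St k n) : ℕ :=
  match s.2 with
  | .chain td => td.length
  | .pair _ td => td.length

def PinsOk (y : Fin n → Fin k) (P : Fin n → Option (Fin k)) : Prop :=
  ∀ i v, P i = some v → y i = v

def Inv (d : Fin k) (y : Fin n → Fin k) (s : St k n) : Prop :=
  PinsOk y s.1 ∧
  match s.2 with
  | .chain td => ∀ i, s.1 i = none → y i ∈ td
  | .pair p td =>
      2 ≤ td.length ∧ s.1 p = none ∧ y p ≠ td.headD d ∧
      (∀ i, s.1 i = none → y i ∈ td) ∧ Function.Injective y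

lemma fb_G (x y : Fin n → Fin k) (i : Fin n) :
    feedback x y i = Fbk.G ↔ x i = y i := by
  unfold feedback
  split_ifs with h1 h2 <;> simp [h1]

lemma stepPins_ok {d : Fin k} {y : Fin n → Fin k} {s : St k n} (h : PinsOk y s.1) :
    PinsOk y (stepPins d s (feedback (sg d s) y)) := by
  intro i v hv
  unfold stepPins at hv
  by_cases h1 : s.1 i = none
  · rw [if_pos h1] at hv
    by_cases h2 : feedback (sg d s) y i = Fbk.G
    · rw [if_pos h2] at hv
      cases hv
      exact ((fb_G _ _ _).1 h2).symm
    · rw [if_neg h2] at hv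
      exact absurd hv (by simp)
  · rw [if_neg h1] at hv
    exact h i v hv

lemma stepPins_none {d : Fin k} {s : St k n} {fb : Fin n → Fbk} {i : Fin n} :
    stepPins d s fb i = none ↔ s.1 i = none ∧ fb i ≠ Fbk.G := by
  unfold stepPins
  split_ifs with h1 h2 <;> simp_all

lemma win_chain {d : Fin k} {y : Fin n → Fin k} {P : Fin n → Option (Fin k)}
    {td : List (Fin k)} (hInv : Inv d y (P, M.chain td)) (hlen : td.length ≤ 1) :
    sg d (P, M.chain td) = y := by
  obtain ⟨hP, hmem⟩ := hInv
  funext i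
  cases hPi : P i with
  | some v => simp [sg, hPi]; exact (hP i v hPi).symm
  | none =>
    have hy := hmem i hPi
    match td, hlen with
    | [], _ => simp at hy
    | [v], _ =>
      simp at hy
      simp [sg, hPi, hy]

lemma win_pair {d : Fin k} {y : Fin n → Fin k} {P : Fin n → Option (Fin k)}
    {p : Fin n} {v0 w : Fin k} (hInv : Inv d y (P, M.pair p [v0, w])) :
    sg d (P, M.pair p [v0, w]) = y := by
  obtain ⟨hP, -, hPp, hne, hmem, hinj⟩ := hInv
  have hne' : y p ≠ v0 := by simpa using hne
  have hyp : y p = w := by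
    have := hmem p hPp
    simp at this
    tauto
  funext i
  cases hPi : P i with
  | some v => simp [sg, hPi]; exact (hP i v hPi).symm
  | none =>
    by_cases hip : i = p
    · subst hip; simp [sg, hPi, hyp]
    · have hyi := hmem i hPi
      simp at hyi
      have : y i = v0 := by
        rcases hyi with h | h
        · exact h
        · exact absurd (hinj (h.trans hyp.symm)) hip
      simp [sg, hPi, hip, this]

lemma play_wins (d : Fin k) (y : Fin n → Fin k) :
    ∀ N (s : St k n), lenM s ≤ N → Inv d y s →
      ∃ j, j < phi s ∧ sg d (play d y s j) = y := by
  intro N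
  induction N with
  | zero =>
    rintro ⟨P, md⟩ h0 hInv
    cases md with
    | chain td =>
      refine ⟨0, ?_, ?_⟩
      · simp [phi]
      · exact win_chain hInv (by have h0' : td.length ≤ 0 := h0; omega)
    | pair p td =>
      have h0' : td.length ≤ 0 := h0
      have h2 := hInv.2.1
      omega
  | succ N ih =>
    rintro ⟨P, md⟩ hlen hInv
    cases md with
    | chain td =>
      match td with
      | [] => exact ⟨0, by simp [phi], win_chain hInv (by simp)⟩
      | [v] => exact ⟨0, by simp [phi], win_chain hInv (by simp)⟩
      | v :: w :: rest =>
        by_cases hwin : sg d (P, M.chain (v :: w :: rest)) = y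
        · exact ⟨0, by simp [phi], hwin⟩
        · have hfb : feedback (sg d (P, M.chain (v :: w :: rest))) y = feedback (sg d (P, M.chain (v :: w :: rest))) y := rfl
          have hstep : step d (P, M.chain (v :: w :: rest)) (feedback (sg d (P, M.chain (v :: w :: rest))) y)
              = (stepPins d (P, M.chain (v :: w :: rest)) (feedback (sg d (P, M.chain (v :: w :: rest))) y), M.chain (w :: rest)) := rfl
          have hInv' : Inv d y (stepPins d (P, M.chain (v :: w :: rest)) (feedback (sg d (P, M.chain (v :: w :: rest))) y), M.chain (w :: rest)) := by
            refine ⟨stepPins_ok hInv.1, ?_⟩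
            intro i hi
            obtain ⟨h1, h2⟩ := stepPins_none.1 hi
            have h1' : P i = none := h1
            have hmem := hInv.2 i h1'
            have hsg : sg d (P, M.chain (v :: w :: rest)) i = v := by simp [sg, h1']
            have hne : y i ≠ v := by
              intro he
              exact h2 ((fb_G _ _ _).2 (by rw [hsg, he]))
            simp at hmem ⊢
            tauto
          have hl : lenM (stepPins d (P, M.chain (v :: w :: rest)) (feedback (sg d (P, M.chain (v :: w :: rest))) y), M.chain (w :: rest)) ≤ N := by
            simp [lenM] at hlen ⊢; omega
          obtain ⟨j, hj, hwin'⟩ := ih _ hl hInv'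
          refine ⟨j + 1, ?_, ?_⟩
          · simp [phi] at hj ⊢; omega
          · rw [play_front, hstep]; exact hwin'
    | pair p td =>
      have hlen2 := hInv.2.1
      match td, hlen2 with
      | v0 :: w :: rest, _ =>
      match rest with
      | [] => exact ⟨0, by simp [phi], win_pair hInv⟩
      | u :: rest' =>
        by_cases hwin : sg d (P, M.pair p (v0 :: w :: u :: rest')) = y
        · exact ⟨0, by simp [phi], hwin⟩
        · obtain ⟨hP, -, hPp, hne, hmem, hinj⟩ := hInv
          have hPp' : P p = none := hPp
          have hne' : y p ≠ v0 := by simpa using hne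
          have hsgp : sg d (P, M.pair p (v0 :: w :: u :: rest')) p = w := by
            simp [sg, hPp']
          have hsgi : ∀ i, i ≠ p → P i = none →
              sg d (P, M.pair p (v0 :: w :: u :: rest')) i = v0 := by
            intro i hip hPi
            simp [sg, hPi, hip]
          by_cases hpG : feedback (sg d (P, M.pair p (v0 :: w :: u :: rest'))) y p = Fbk.G
          · -- p got pinned with w; switch to chain
            have hyp : y p = w := by rw [← hsgp]; exact ((fb_G _ _ _).1 hpG).symm
            have hstep : step d (P, M.pair p (v0 :: w :: u :: rest')) (feedback (sg d (P, M.pair p (v0 :: w :: u :: rest'))) y)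
                = (stepPins d (P, M.pair p (v0 :: w :: u :: rest')) (feedback (sg d (P, M.pair p (v0 :: w :: u :: rest'))) y), M.chain (u :: rest')) := by
              simp [step, stepMode, hpG]
            have hInv' : Inv d y (stepPins d (P, M.pair p (v0 :: w :: u :: rest')) (feedback (sg d (P, M.pair p (v0 :: w :: u :: rest'))) y), M.chain (u :: rest')) := by
              refine ⟨stepPins_ok hP, ?_⟩
              intro i hi
              obtain ⟨h1, h2⟩ := stepPins_none.1 hi
              have h1' : P i = none := h1
              have hip : i ≠ p := by rintro rfl; exact h2 hpG
              have hyi := hmem i h1'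
              have h3 : y i ≠ v0 := by
                intro he
                exact h2 ((fb_G _ _ _).2 (by rw [hsgi i hip h1', he]))
              have h4 : y i ≠ w := by
                intro he
                exact hip (hinj (he.trans hyp.symm))
              simp at hyi ⊢
              tauto
            have hl : lenM (stepPins d (P, M.pair p (v0 :: w :: u :: rest')) (feedback (sg d (P, M.pair p (v0 :: w :: u :: rest'))) y), M.chain (u :: rest')) ≤ N := by
              simp [lenM] at hlen ⊢; omega
            obtain ⟨j, hj, hwin'⟩ := ih _ hl hInv'
            refine ⟨j + 1, ?_, ?_⟩
            · simp [phi] at hj ⊢; omega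
            · rw [play_front, hstep]; exact hwin'
          · -- pair continues with (p, w)
            have hstep : step d (P, M.pair p (v0 :: w :: u :: rest')) (feedback (sg d (P, M.pair p (v0 :: w :: u :: rest'))) y)
                = (stepPins d (P, M.pair p (v0 :: w :: u :: rest')) (feedback (sg d (P, M.pair p (v0 :: w :: u :: rest'))) y), M.pair p (w :: u :: rest')) := by
              simp [step, stepMode, hpG]
            have hypw : y p ≠ w := by
              intro he
              exact hpG ((fb_G _ _ _).2 (by rw [hsgp, he]))
            have hInv' : Inv d y (stepPins d (P, M.pair p (v0 :: w :: u :: rest')) (feedback (sg d (P, M.pair p (v0 :: w :: u :: rest'))) y), M.pair p (w :: u :: rest')) := by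
              refine ⟨stepPins_ok hP, ?_, ?_, ?_, ?_, hinj⟩
              · simp
              · exact stepPins_none.2 ⟨hPp', hpG⟩
              · simpa using hypw
              · intro i hi
                obtain ⟨h1, h2⟩ := stepPins_none.1 hi
                have h1' : P i = none := h1
                have hyi := hmem i h1'
                have h3 : y i ≠ v0 := by
                  by_cases hip : i = p
                  · subst hip; exact hne'
                  · intro he
                    exact h2 ((fb_G _ _ _).2 (by rw [hsgi i hip h1', he]))
                simp at hyi ⊢
                tauto
            have hl : lenM (stepPins d (P, M.pair p (v0 :: w :: u :: rest')) (feedback (sg d (P, M.pair p (v0 :: w :: u :: rest'))) y), M.pair p (w :: u :: rest')) ≤ N := by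
              simp [lenM] at hlen ⊢; omega
            obtain ⟨j, hj, hwin'⟩ := ih _ hl hInv'
            refine ⟨j + 1, ?_, ?_⟩
            · simp [phi] at hj ⊢; omega
            · rw [play_front, hstep]; exact hwin'

/-! ### Feedback analysis for injective and constant guesses -/

lemma misses_mem {K : ℕ} {x y : Fin n → Fin K} {v : Fin K} :
    v ∈ misses x y ↔ ∃ j, x j ≠ y j ∧ y j = v := by
  unfold misses
  simp [Multiset.mem_map, Finset.mem_filter]

lemma fbState_mem {K : ℕ} {x y : Fin n → Fin K} (hx : Function.Injective x) (i : Fin n) :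
    ∀ j, j ≤ i.1 → (x i ∈ fbState x y j ↔ x i ∈ misses x y) := by
  intro j
  induction j with
  | zero => intro _; simp [fbState]
  | succ j ihj =>
    intro hj
    have hjn : j < n := by have := i.2; omega
    have hne : x i ≠ x ⟨j, hjn⟩ := by
      intro he
      have := hx he
      have : i.1 = j := by rw [this]
      omega
    rw [fbState, dif_pos hjn]
    split_ifs with h1 h2
    · exact ihj (by omega)
    · rw [Multiset.mem_erase_of_ne hne]
      exact ihj (by omega)
    · exact ihj (by omega)

lemma fb_B {K : ℕ} {x y : Fin n → Fin K} (hx : Function.Injective x) (i : Fin n) :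
    feedback x y i ≠ Fbk.B ↔ x i ∈ Set.range y := by
  unfold feedback
  split_ifs with h1 h2
  · simp only [ne_eq]
    constructor
    · intro _; exact ⟨i, h1.symm⟩
    · intro _; simp
  · simp only [ne_eq]
    constructor
    · intro _
      obtain ⟨j, -, hj⟩ := misses_mem.1 ((fbState_mem hx i i.1 le_rfl).1 h2)
      exact ⟨j, hj⟩
    · intro _; simp
  · constructor
    · intro h; exact absurd rfl h
    · rintro ⟨j, hj⟩
      exfalso
      have hxj : x j ≠ y j := by
        intro he
        exact h1 (hx (he.trans hj) ▸ hj ▸ he)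
      exact h2 ((fbState_mem hx i i.1 le_rfl).2 (misses_mem.2 ⟨j, hxj, hj⟩))

end CMAux

namespace CMAux
open CM

section Concrete

variable (c n : ℕ)

def colOf (hc : 0 < c) (hn : 0 < n) (r : ℕ) (i : Fin n) : Fin (c * n) :=
  ⟨(r * n + i.1) % (c * n), Nat.mod_lt _ (Nat.mul_pos hc hn)⟩

lemma colOf_val (hc : 0 < c) (hn : 0 < n) {r : ℕ} (hr : r < c) (i : Fin n) :
    (colOf c n hc hn r i).1 = r * n + i.1 := by
  have hb : r * n + i.1 < c * n := by
    have h1 : r * n + i.1 < (r + 1) * n := by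
      have := i.2
      rw [Nat.succ_mul]
      omega
    have h2 : (r + 1) * n ≤ c * n := Nat.mul_le_mul_right n hr
    omega
  exact Nat.mod_eq_of_lt hb

lemma colOf_inj (hc : 0 < c) (hn : 0 < n) {r : ℕ} (hr : r < c) :
    Function.Injective (colOf c n hc hn r) := by
  intro i j h
  have hi := colOf_val c n hc hn hr i
  have hj := colOf_val c n hc hn hr j
  have : (colOf c n hc hn r i).1 = (colOf c n hc hn r j).1 := by rw [h]
  rw [hi, hj] at this
  exact Fin.ext (by omega)

def d0 (hc : 0 < c) (hn : 0 < n) : Fin (c * n) := ⟨0, Nat.mul_pos hc hn⟩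

def fbf (h : List (Fin n → Fbk)) : ℕ → Fin n → Fbk :=
  fun r => h.getD r (fun _ => Fbk.B)

def Rset (hn : 0 < n) (f : ℕ → Fin n → Fbk) : Finset (Fin (c * n)) :=
  Finset.univ.filter (fun v => f (v.1 / n) ⟨v.1 % n, Nat.mod_lt _ hn⟩ ≠ Fbk.B)

noncomputable def pick {α : Type*} (P : α → Prop) : Option α :=
  if h : ∃ a, P a then some (Classical.choose h) else none

lemma pick_some {α : Type*} {P : α → Prop} {a : α} (h : pick P = some a) : P a := by
  unfold pick at h
  split_ifs at h with h1
  · cases h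
    exact Classical.choose_spec h1

lemma pick_none {α : Type*} {P : α → Prop} (h : pick P = none) (a : α) : ¬ P a := by
  intro hP
  unfold pick at h
  rw [dif_pos ⟨a, hP⟩] at h
  exact absurd h (by simp)

noncomputable def pins0 (hc : 0 < c) (hn : 0 < n) (f : ℕ → Fin n → Fbk) :
    Fin n → Option (Fin (c * n)) :=
  fun i => (pick (fun r => r < c ∧ f r i = Fbk.G)).map (fun r => colOf c n hc hn r i)

def Qp (hn : 0 < n) (f : ℕ → Fin n → Fbk) (v : Fin (c * n)) : Prop :=
  v ∈ Rset c n hn f ∧ f (v.1 / n) ⟨v.1 % n, Nat.mod_lt _ hn⟩ ≠ Fbk.G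

noncomputable def initSt (hc : 0 < c) (hn : 0 < n) (f : ℕ → Fin n → Fbk) : St (c * n) n :=
  if (Rset c n hn f).card = n then
    match pick (Qp c n hn f) with
    | some v0 => (fun _ => none,
        M.pair ⟨v0.1 % n, Nat.mod_lt _ hn⟩ (v0 :: ((Rset c n hn f).erase v0).sort (· ≤ ·)))
    | none => (pins0 c n hc hn f, M.chain [])
  else (pins0 c n hc hn f, M.chain ((Rset c n hn f).sort (· ≤ ·)))

noncomputable def strat (hc : 0 < c) (hn : 0 < n) : Strategy (c * n) n := fun h =>
  if h.length < c then colOf c n hc hn h.length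
  else sg (d0 c n hc hn) ((h.drop c).foldl (step (d0 c n hc hn)) (initSt c n hc hn (fbf n h)))

lemma div_lt_c (hn : 0 < n) (v : Fin (c * n)) : v.1 / n < c :=
  (Nat.div_lt_iff_lt_mul hn).2 v.2

lemma initSt_congr (hc : 0 < c) (hn : 0 < n) {f f' : ℕ → Fin n → Fbk}
    (hag : ∀ r < c, f r = f' r) : initSt c n hc hn f = initSt c n hc hn f' := by
  have hR : Rset c n hn f = Rset c n hn f' := by
    ext v
    unfold Rset
    simp only [Finset.mem_filter, Finset.mem_univ, true_and]
    rw [hag _ (div_lt_c c n hn v)]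
  have hQ : Qp c n hn f = Qp c n hn f' := by
    funext v
    unfold Qp
    rw [hR, hag _ (div_lt_c c n hn v)]
  have hp : pins0 c n hc hn f = pins0 c n hc hn f' := by
    funext i
    unfold pins0
    congr 1
    apply congrArg
    funext r
    by_cases hr : r < c
    · rw [hag _ hr]
    · simp [hr]
  unfold initSt
  rw [hR, hQ, hp]

end Concrete

end CMAux

namespace CMAux
open CM

section Main

variable {c n : ℕ} (hc : 0 < c) (hn : 0 < n) (y : Fin n → Fin (c * n))

lemma colOf_mod (v : Fin (c * n)) :
    colOf c n hc hn (v.1 / n) ⟨v.1 % n, Nat.mod_lt _ hn⟩ = v := by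
  apply Fin.ext
  rw [colOf_val c n hc hn (div_lt_c c n hn v)]
  have h1 := Nat.div_add_mod v.1 n
  have h2 : n * (v.1 / n) = (v.1 / n) * n := Nat.mul_comm _ _
  simp only []
  omega

lemma Rset_eq (f : ℕ → Fin n → Fbk)
    (hfb : ∀ r < c, f r = feedback (colOf c n hc hn r) y) :
    Rset c n hn f = Finset.univ.image y := by
  ext v
  have hd := div_lt_c c n hn v
  unfold Rset
  simp only [Finset.mem_filter, Finset.mem_univ, true_and, Finset.mem_image]
  rw [hfb _ hd, fb_B (colOf_inj c n hc hn hd), colOf_mod hc hn]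
  simp [Set.mem_range]

lemma pins0_ok (f : ℕ → Fin n → Fbk)
    (hfb : ∀ r < c, f r = feedback (colOf c n hc hn r) y) :
    PinsOk y (pins0 c n hc hn f) := by
  intro i v hv
  unfold pins0 at hv
  rw [Option.map_eq_some_iff] at hv
  obtain ⟨r, hpick, hcol⟩ := hv
  obtain ⟨hrc, hG⟩ := pick_some hpick
  rw [hfb _ hrc] at hG
  have := (fb_G _ _ _).1 hG
  rw [← hcol, ← this]

lemma init_ok (hn2 : 2 ≤ n) (f : ℕ → Fin n → Fbk)
    (hfb : ∀ r < c, f r = feedback (colOf c n hc hn r) y) :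
    Inv (d0 c n hc hn) y (initSt c n hc hn f) ∧ phi (initSt c n hc hn f) ≤ n - 1 := by
  have hR := Rset_eq hc hn y f hfb
  have hcard_le : (Rset c n hn f).card ≤ n := by
    rw [hR]
    exact Finset.card_image_le.trans (by simp)
  have hyR : ∀ i : Fin n, y i ∈ Rset c n hn f := by
    intro i
    rw [hR]
    exact Finset.mem_image_of_mem y (Finset.mem_univ i)
  unfold initSt
  split_ifs with hcard
  · have hinj : Function.Injective y := by
      rw [← Set.injOn_univ]
      have h2 : Set.InjOn y ↑(Finset.univ : Finset (Fin n)) := by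
        apply Finset.card_image_iff.1
        rw [← hR, hcard]
        simp
      simpa using h2
    cases hpick : pick (Qp c n hn f) with
    | some v0 =>
      obtain ⟨hv0R, hv0G⟩ := pick_some hpick
      have hd := div_lt_c c n hn v0
      have hyp : y ⟨v0.1 % n, Nat.mod_lt _ hn⟩ ≠ v0 := by
        intro he
        apply hv0G
        rw [hfb _ hd]
        exact (fb_G _ _ _).2 (by rw [colOf_mod hc hn, he])
      have hlen_td : (v0 :: ((Rset c n hn f).erase v0).sort (· ≤ ·)).length = n := by
        simp [Finset.length_sort, Finset.card_erase_of_mem hv0R, hcard]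
        omega
      refine ⟨⟨?_, ?_, ?_, ?_, ?_, hinj⟩, ?_⟩
      · intro i v h
        exact absurd h (by simp)
      · rw [hlen_td]; omega
      · rfl
      · simpa using hyp
      · intro i _
        by_cases hiv : y i = v0
        · simp [hiv]
        · simp only [List.mem_cons]
          right
          rw [Finset.mem_sort, Finset.mem_erase]
          exact ⟨hiv, hyR i⟩
      · show (v0 :: ((Rset c n hn f).erase v0).sort (· ≤ ·)).length - 1 ≤ n - 1
        rw [hlen_td]
    | none =>
      have hpins_tot : ∀ i : Fin n, pins0 c n hc hn f i ≠ none := by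
        intro i hnone
        have hG0 : f ((y i).1 / n) ⟨(y i).1 % n, Nat.mod_lt _ hn⟩ = Fbk.G := by
          by_contra hne
          exact pick_none hpick (y i) ⟨hyR i, hne⟩
        have hd := div_lt_c c n hn (y i)
        have h2 : y ⟨(y i).1 % n, Nat.mod_lt _ hn⟩ = y i := by
          have h3 := hG0
          rw [hfb _ hd] at h3
          have h4 := (fb_G _ _ _).1 h3
          rw [colOf_mod hc hn] at h4
          exact h4.symm
        have hij : (⟨(y i).1 % n, Nat.mod_lt _ hn⟩ : Fin n) = i := hinj h2
        rw [hij] at hG0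
        unfold pins0 at hnone
        rw [Option.map_eq_none_iff] at hnone
        exact pick_none hnone ((y i).1 / n) ⟨hd, hG0⟩
      refine ⟨⟨pins0_ok hc hn y f hfb, ?_⟩, ?_⟩
      · intro i hi
        exact absurd hi (hpins_tot i)
      · show max 1 ([] : List (Fin (c * n))).length ≤ n - 1
        simp
        omega
  · refine ⟨⟨pins0_ok hc hn y f hfb, ?_⟩, ?_⟩
    · intro i _
      rw [Finset.mem_sort]
      exact hyR i
    · show max 1 ((Rset c n hn f).sort (· ≤ ·)).length ≤ n - 1
      rw [Finset.length_sort]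
      have : (Rset c n hn f).card ≠ n := hcard
      omega

lemma hist_length {K N : ℕ} (S : Strategy K N) (y : Fin N → Fin K) :
    ∀ r, (hist S y r).length = r := by
  intro r
  induction r with
  | zero => rfl
  | succ r ih => simp [hist, ih]

lemma hist_getD {K N : ℕ} (S : Strategy K N) (y : Fin N → Fin K) :
    ∀ m r, r < m → (hist S y m).getD r (fun _ => Fbk.B) = feedback (guess S y r) y := by
  intro m
  induction m with
  | zero => intro r hr; omega
  | succ m ih =>
    intro r hr
    show (hist S y m ++ [feedback (S (hist S y m)) y]).getD r (fun _ => Fbk.B) = _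
    rcases Nat.lt_or_ge r m with h | h
    · rw [List.getD_append _ _ _ _ (by rw [hist_length]; exact h)]
      exact ih r h
    · have hrm : r = m := by omega
      subst hrm
      rw [List.getD_append_right _ _ _ _ (by rw [hist_length])]
      rw [hist_length]
      simp [guess]

lemma strat_app_lt {h : List (Fin n → Fbk)} (hl : h.length < c) :
    strat c n hc hn h = colOf c n hc hn h.length := by
  unfold strat
  rw [if_pos hl]

lemma strat_app_ge {h : List (Fin n → Fbk)} (hl : ¬ h.length < c) :
    strat c n hc hn h
      = sg (d0 c n hc hn)
          ((h.drop c).foldl (step (d0 c n hc hn)) (initSt c n hc hn (fbf n h))) := by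
  unfold strat
  rw [if_neg hl]

lemma guess_block {r : ℕ} (hr : r < c) :
    guess (strat c n hc hn) y r = colOf c n hc hn r := by
  show strat c n hc hn (hist (strat c n hc hn) y r) = _
  rw [strat_app_lt hc hn (by rw [hist_length]; exact hr), hist_length]

lemma fbf_block {m r : ℕ} (hm : c ≤ m) (hr : r < c) :
    fbf n (hist (strat c n hc hn) y m) r = feedback (colOf c n hc hn r) y := by
  unfold fbf
  rw [hist_getD _ _ m r (lt_of_lt_of_le hr hm), guess_block hc hn y hr]

lemma init_stable (j : ℕ) :
    initSt c n hc hn (fbf n (hist (strat c n hc hn) y (c + j)))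
      = initSt c n hc hn (fbf n (hist (strat c n hc hn) y c)) :=
  initSt_congr c n hc hn (fun r hr => by
    rw [fbf_block hc hn y (Nat.le_add_right c j) hr, fbf_block hc hn y le_rfl hr])

lemma stateFrom_eq : ∀ j : ℕ,
    ((hist (strat c n hc hn) y (c + j)).drop c).foldl (step (d0 c n hc hn))
        (initSt c n hc hn (fbf n (hist (strat c n hc hn) y c)))
      = play (d0 c n hc hn) y (initSt c n hc hn (fbf n (hist (strat c n hc hn) y c))) j := by
  intro j
  induction j with
  | zero =>
    rw [Nat.add_zero]
    have hd : (hist (strat c n hc hn) y c).drop c = [] := by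
      have h2 := List.drop_length (l := hist (strat c n hc hn) y c)
      rwa [hist_length] at h2
    rw [hd]
    rfl
  | succ j ih =>
    have hlen : c ≤ (hist (strat c n hc hn) y (c + j)).length := by
      rw [hist_length]; omega
    show ((hist (strat c n hc hn) y (c + j)
        ++ [feedback (strat c n hc hn (hist (strat c n hc hn) y (c + j))) y]).drop c).foldl
        (step (d0 c n hc hn)) _ = _
    rw [List.drop_append_of_le_length hlen, List.foldl_append, ih]
    have hS : strat c n hc hn (hist (strat c n hc hn) y (c + j))
        = sg (d0 c n hc hn)
            (play (d0 c n hc hn) y (initSt c n hc hn (fbf n (hist (strat c n hc hn) y c))) j) := by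
      rw [strat_app_ge hc hn (by rw [hist_length]; omega)]
      rw [init_stable hc hn y j, ih]
    rw [List.foldl_cons, List.foldl_nil, hS]
    rfl

lemma guess_ge (j : ℕ) :
    guess (strat c n hc hn) y (c + j)
      = sg (d0 c n hc hn)
          (play (d0 c n hc hn) y (initSt c n hc hn (fbf n (hist (strat c n hc hn) y c))) j) := by
  show strat c n hc hn (hist (strat c n hc hn) y (c + j)) = _
  rw [strat_app_ge hc hn (by rw [hist_length]; omega)]
  rw [init_stable hc hn y j, stateFrom_eq hc hn y j]

end Main

end CMAux

/-- Upper bound for `k = c·n` colors: `F(c·n, n) ≤ c + n − 1`. -/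
theorem stmt15 (c n : ℕ) (hc : 1 ≤ c) (hn : 1 ≤ n) :
    CM.F (c * n) n ≤ c + n - 1 := by
  have hc' : 0 < c := hc
  have hn' : 0 < n := hn
  apply Nat.sInf_le
  refine ⟨CMAux.strat c n hc' hn', ?_⟩
  intro y
  by_cases hn2 : 2 ≤ n
  · have hfb : ∀ r < c, CMAux.fbf n (CM.hist (CMAux.strat c n hc' hn') y c) r
        = CM.feedback (CMAux.colOf c n hc' hn' r) y :=
      fun r hr => CMAux.fbf_block hc' hn' y le_rfl hr
    obtain ⟨hInv, hphi⟩ := CMAux.init_ok hc' hn' y hn2 _ hfb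
    obtain ⟨j, hj, hwin⟩ := CMAux.play_wins _ y (CMAux.lenM _) _ le_rfl hInv
    refine ⟨c + j, ?_, ?_⟩
    · have := lt_of_lt_of_le hj hphi
      omega
    · rw [CMAux.guess_ge hc' hn' y j]
      exact hwin
  · have hn1 : n = 1 := by omega
    subst hn1
    have hy2 : (y 0).1 < c := by have := (y 0).2; omega
    refine ⟨(y 0).1, by omega, ?_⟩
    rw [CMAux.guess_block hc' hn' y hy2]
    funext i
    have hi0 : i = 0 := Subsingleton.elim i 0
    subst hi0
    apply Fin.ext
    rw [CMAux.colOf_val c 1 hc' hn' hy2 0]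
    simp
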